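/- arXiv:2509.16868 — 7 statements merged into one kernel-verified Lean document; each statement's English description precedes it below -/
import Mathlib

section
/- For a one-variable polynomial P(t) = Σ_{k=0}^{d} c_k t^k with nonnegative real coefficients and c_d ≠ 0, the sequence (c_k) is log-concave (c_{a}·c_{a+2} ≤ c_{a+1}² for all 0 ≤ a ≤ d−2) if and only if for every 0 ≤ a ≤ d−2, the Hessian of the quadratic form ∂^{d−2}N(Homog(P))/∂z^{d−2−a}∂t^{a}, namely the matrix [[c_a, c_{a+1}],[c_{a+1}, c_{a+2}]], has at most one positive eigenvalue. -/
/-- For `P(t) = Σ_{k=0}^d c_k t^k` with nonnegative coefficients and `c d ≠ 0`, the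
sequence of coefficients is log-concave iff for every `0 ≤ a ≤ d-2` the Hessian
`[[c_a, c_{a+1}], [c_{a+1}, c_{a+2}]]` of the corresponding quadratic form has at most
one positive eigenvalue, i.e. its smaller eigenvalue is nonpositive. -/
theorem logConcave_iff_hessians (d : ℕ) (c : ℕ → ℝ)
    (hnonneg : ∀ k, 0 ≤ c k) (hd : c d ≠ 0) :
    (∀ a : ℕ, a + 2 ≤ d → c a * c (a + 2) ≤ (c (a + 1)) ^ 2) ↔
    (∀ a : ℕ, a + 2 ≤ d →
      ((c a + c (a + 2)) - Real.sqrt ((c a - c (a + 2)) ^ 2 + 4 * (c (a + 1)) ^ 2)) / 2 ≤ 0) := by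
  have key : ∀ a : ℕ, (c a * c (a + 2) ≤ (c (a + 1)) ^ 2 ↔
      ((c a + c (a + 2)) - Real.sqrt ((c a - c (a + 2)) ^ 2 + 4 * (c (a + 1)) ^ 2)) / 2 ≤ 0) := by
    intro a
    set x := c a
    set y := c (a + 2)
    set z := c (a + 1)
    have hx : 0 ≤ x := hnonneg a
    have hy : 0 ≤ y := hnonneg (a + 2)
    have htr : 0 ≤ x + y := by linarith
    constructor
    · intro h
      have h1 : (x + y) ^ 2 ≤ (x - y) ^ 2 + 4 * z ^ 2 := by nlinarith
      have h2 : x + y ≤ Real.sqrt ((x - y) ^ 2 + 4 * z ^ 2) := by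
        rw [← Real.sqrt_sq htr]; exact Real.sqrt_le_sqrt h1
      linarith
    · intro h
      have h2 : x + y ≤ Real.sqrt ((x - y) ^ 2 + 4 * z ^ 2) := by linarith
      have h1 : (x + y) ^ 2 ≤ (x - y) ^ 2 + 4 * z ^ 2 := by
        have := Real.sq_sqrt (by positivity : (0:ℝ) ≤ (x - y) ^ 2 + 4 * z ^ 2)
        nlinarith [Real.sqrt_nonneg ((x - y) ^ 2 + 4 * z ^ 2)]
      nlinarith
  exact forall₂_congr fun a _ => key a
end

section
/- For every integer n ≥ 1, the Links–Gould polynomial of the (2,n)-torus link satisfies LG(T(2,n)) = (−1)^{n−1} + Σ_{k=2}^{n} ( t₁^{n−k} t₀ Σ_{l=0}^{k−2} t₀^l (−1)^{k−2−l} − t₁^{n−k+1} Σ_{m=0}^{k−1} t₀^m (−1)^{k−1−m} ), where LG(T(2,n)) is defined recursively via the skein evaluation: LG(T(2,n)) = A_n·(t₀+t₁−t₀t₁−1) − B_n with A_n = (−1)^n/((t₀+1)(t₁+1)) + t₀^n/((t₀+1)(t₀−t₁)) + t₁^n/((t₁+1)(t₁−t₀)) and B_n = (−1)^n(t₀+t₁)/((t₀+1)(t₁+1))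 + t₀^n(t₁−1)/((t₀+1)(t₀−t₁)) + t₁^n(t₀−1)/((t₁+1)(t₁−t₀)). -/
/-- Alternating geometric sum: `(∑_{l<m} t^l (-1)^{m-1-l}) (t+1) = t^m - (-1)^m`. -/
lemma LG_geo_aux {F : Type*} [Field F] (t0 : F) :
    ∀ m : ℕ, (∑ l ∈ Finset.range m, t0 ^ l * (-1 : F) ^ (m - 1 - l)) * (t0 + 1)
      = t0 ^ m - (-1) ^ m := by
  intro m
  induction m with
  | zero => simp
  | succ m ih =>
    rw [Finset.sum_range_succ]
    have e : ∀ l ∈ Finset.range m,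
        t0 ^ l * (-1 : F) ^ (m + 1 - 1 - l) = -(t0 ^ l * (-1 : F) ^ (m - 1 - l)) := by
      intro l hl
      have hl' : l < m := Finset.mem_range.mp hl
      have : m + 1 - 1 - l = (m - 1 - l) + 1 := by omega
      rw [this, pow_succ]; ring
    rw [Finset.sum_congr rfl e, Finset.sum_neg_distrib]
    have : m + 1 - 1 - m = 0 := by omega
    rw [this, pow_zero, pow_succ, pow_succ]
    linear_combination -ih

/-- Single-fraction normal form for the skein evaluation expression. -/
lemma LG_frac_aux {F : Type*} [Field F] (t0 t1 : F)
    (h0 : t0 + 1 ≠ 0) (h1 : t1 + 1 ≠ 0) (h01 : t0 - t1 ≠ 0) (E A B : F) :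
    (E / ((t0 + 1) * (t1 + 1)) + A / ((t0 + 1) * (t0 - t1)) + B / ((t1 + 1) * (t1 - t0)))
        * (t0 + t1 - t0 * t1 - 1)
      - (E * (t0 + t1) / ((t0 + 1) * (t1 + 1)) + A * (t1 - 1) / ((t0 + 1) * (t0 - t1))
        + B * (t0 - 1) / ((t1 + 1) * (t1 - t0)))
    = ((E * (t0 - t1) + A * (t1 + 1) + -(B * (t0 + 1))) * (t0 + t1 - t0 * t1 - 1)
        - (E * (t0 + t1) * (t0 - t1) + A * (t1 - 1) * (t1 + 1) + -(B * (t0 - 1) * (t0 + 1))))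
      / ((t0 + 1) * ((t1 + 1) * (t0 - t1))) := by
  have h01' : t1 - t0 ≠ 0 := fun h => h01 (by linear_combination -h)
  have hD : (t0 + 1) * ((t1 + 1) * (t0 - t1)) ≠ 0 :=
    mul_ne_zero h0 (mul_ne_zero h1 h01)
  have e1 : ∀ X : F, X / ((t0 + 1) * (t1 + 1))
      = X * (t0 - t1) / ((t0 + 1) * ((t1 + 1) * (t0 - t1))) := by
    intro X; rw [div_eq_div_iff (mul_ne_zero h0 h1) hD]; ring
  have e2 : ∀ X : F, X / ((t0 + 1) * (t0 - t1))
      = X * (t1 + 1) / ((t0 + 1) * ((t1 + 1) * (t0 - t1))) := by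
    intro X; rw [div_eq_div_iff (mul_ne_zero h0 h01) hD]; ring
  have e3 : ∀ X : F, X / ((t1 + 1) * (t1 - t0))
      = -(X * (t0 + 1)) / ((t0 + 1) * ((t1 + 1) * (t0 - t1))) := by
    intro X; rw [div_eq_div_iff (mul_ne_zero h1 h01') hD]; ring
  rw [e1 E, e1 (E * (t0 + t1)), e2 A, e2 (A * (t1 - 1)), e3 B, e3 (B * (t0 - 1)),
    ← add_div, ← add_div, ← add_div, ← add_div,
    div_mul_eq_mul_div, div_sub_div_same]

set_option maxHeartbeats 1600000 in
/-- The skein evaluation of the Links–Gould invariant of the `(2,n)`-torus link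
equals the closed formula, as an identity of rational expressions:
`A_n (t₀+t₁−t₀t₁−1) − B_n = (−1)^{n−1} + Σ_{k=2}^n (…)`. -/
theorem LG_torus_link_formula (F : Type*) [Field F] (t0 t1 : F)
    (h0 : t0 + 1 ≠ 0) (h1 : t1 + 1 ≠ 0) (h01 : t0 - t1 ≠ 0)
    (n : ℕ) (hn : 1 ≤ n) :
    ((-1 : F) ^ n / ((t0 + 1) * (t1 + 1))
        + t0 ^ n / ((t0 + 1) * (t0 - t1))
        + t1 ^ n / ((t1 + 1) * (t1 - t0))) * (t0 + t1 - t0 * t1 - 1)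
      - ((-1 : F) ^ n * (t0 + t1) / ((t0 + 1) * (t1 + 1))
        + t0 ^ n * (t1 - 1) / ((t0 + 1) * (t0 - t1))
        + t1 ^ n * (t0 - 1) / ((t1 + 1) * (t1 - t0)))
    = (-1 : F) ^ (n - 1)
      + ∑ k ∈ Finset.Icc 2 n,
          (t1 ^ (n - k) * t0 * ∑ l ∈ Finset.range (k - 1), t0 ^ l * (-1 : F) ^ (k - 2 - l)
            - t1 ^ (n - k + 1) * ∑ m ∈ Finset.range k, t0 ^ m * (-1 : F) ^ (k - 1 - m)) := by
  have h01' : t1 - t0 ≠ 0 := fun h => h01 (by linear_combination -h)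
  have hD : (t0 + 1) * ((t1 + 1) * (t0 - t1)) ≠ 0 :=
    mul_ne_zero h0 (mul_ne_zero h1 h01)
  have key1 : ∀ x : F, x / (t0 + 1) * ((t0 + 1) * ((t1 + 1) * (t0 - t1)))
      = x * ((t1 + 1) * (t0 - t1)) := by
    intro x
    have h : x / (t0 + 1) * ((t0 + 1) * ((t1 + 1) * (t0 - t1)))
        = (x / (t0 + 1) * (t0 + 1)) * ((t1 + 1) * (t0 - t1)) := by ring
    rw [h, div_mul_cancel₀ x h0]
  induction n, hn using Nat.le_induction with
  | base =>
    rw [show Finset.Icc 2 1 = ∅ from Finset.Icc_eq_empty (by norm_num)]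
    simp only [Finset.sum_empty, add_zero]
    norm_num
    field_simp
    ring
  | succ n hn ih =>
    rw [Finset.sum_Icc_succ_top (by omega : 2 ≤ n + 1)]
    have hsum : (∑ k ∈ Finset.Icc 2 n,
          (t1 ^ (n + 1 - k) * t0 * ∑ l ∈ Finset.range (k - 1), t0 ^ l * (-1 : F) ^ (k - 2 - l)
            - t1 ^ (n + 1 - k + 1) * ∑ m ∈ Finset.range k, t0 ^ m * (-1 : F) ^ (k - 1 - m)))
        = t1 * ∑ k ∈ Finset.Icc 2 n,
          (t1 ^ (n - k) * t0 * ∑ l ∈ Finset.range (k - 1), t0 ^ l * (-1 : F) ^ (k - 2 - l)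
            - t1 ^ (n - k + 1) * ∑ m ∈ Finset.range k, t0 ^ m * (-1 : F) ^ (k - 1 - m)) := by
      rw [Finset.mul_sum]
      refine Finset.sum_congr rfl fun k hk => ?_
      have hk' : k ≤ n := (Finset.mem_Icc.mp hk).2
      rw [show n + 1 - k = n - k + 1 from by omega, pow_succ t1 (n - k + 1),
          pow_succ t1 (n - k)]
      ring
    rw [hsum]
    have hS : (∑ k ∈ Finset.Icc 2 n,
          (t1 ^ (n - k) * t0 * ∑ l ∈ Finset.range (k - 1), t0 ^ l * (-1 : F) ^ (k - 2 - l)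
            - t1 ^ (n - k + 1) * ∑ m ∈ Finset.range k, t0 ^ m * (-1 : F) ^ (k - 1 - m)))
        = (((-1 : F) ^ n / ((t0 + 1) * (t1 + 1))
            + t0 ^ n / ((t0 + 1) * (t0 - t1))
            + t1 ^ n / ((t1 + 1) * (t1 - t0))) * (t0 + t1 - t0 * t1 - 1)
          - ((-1 : F) ^ n * (t0 + t1) / ((t0 + 1) * (t1 + 1))
            + t0 ^ n * (t1 - 1) / ((t0 + 1) * (t0 - t1))
            + t1 ^ n * (t0 - 1) / ((t1 + 1) * (t1 - t0)))) - (-1 : F) ^ (n - 1) := by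
      rw [ih]; ring
    rw [hS]
    have hsign : (-1 : F) ^ (n - 1) = -(-1 : F) ^ n := by
      have h := pow_succ (-1 : F) (n - 1)
      rw [show n - 1 + 1 = n from by omega] at h
      linear_combination h
    -- simplify indices in the top (k = n+1) term
    simp only [Nat.add_sub_cancel, Nat.sub_self, pow_zero, one_mul, zero_add,
      show ∀ l, n + 1 - 2 - l = n - 1 - l from fun l => by omega, pow_one]
    have hg1 : (∑ l ∈ Finset.range n, t0 ^ l * (-1 : F) ^ (n - 1 - l))
        = (t0 ^ n - (-1 : F) ^ n) / (t0 + 1) :=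
      eq_div_of_mul_eq h0 (LG_geo_aux t0 n)
    have hg2 : (∑ m ∈ Finset.range (n + 1), t0 ^ m * (-1 : F) ^ (n - m))
        = (t0 ^ (n + 1) - (-1 : F) ^ (n + 1)) / (t0 + 1) := by
      have h := LG_geo_aux t0 (n + 1)
      simp only [Nat.add_sub_cancel] at h
      exact eq_div_of_mul_eq h0 h
    rw [hg1, hg2, hsign, pow_succ t0 n, pow_succ t1 n, pow_succ (-1 : F) n]
    rw [LG_frac_aux t0 t1 h0 h1 h01 ((-1 : F) ^ n * -1) (t0 ^ n * t0) (t1 ^ n * t1),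
        LG_frac_aux t0 t1 h0 h1 h01 ((-1 : F) ^ n) (t0 ^ n) (t1 ^ n)]
    rw [div_eq_iff hD]
    linear_combination
      -t1 * div_mul_cancel₀
        (((-1 : F) ^ n * (t0 - t1) + t0 ^ n * (t1 + 1) + -(t1 ^ n * (t0 + 1)))
            * (t0 + t1 - t0 * t1 - 1)
          - ((-1 : F) ^ n * (t0 + t1) * (t0 - t1) + t0 ^ n * (t1 - 1) * (t1 + 1)
            + -(t1 ^ n * (t0 - 1) * (t0 + 1)))) hD
      - t0 * key1 (t0 ^ n - (-1 : F) ^ n)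
      + t1 * key1 (t0 ^ n * t0 - (-1 : F) ^ n * -1)
end

section
/- The coefficients of the Links–Gould polynomial of the (2,n)-torus link, written LG(T(2,n)) = Σ a_{ij} t₀^i t₁^j via the closed formula, take absolute values only in {0, 1, 2}, and the two-indexed sequence (|a_{ij}|) is 2d log-concave: |a_{i+k,j+l}|·|a_{i−k,j−l}| ≤ |a_{ij}|² for all i,j,k,l ∈ ℤ. -/
open MvPolynomial

/-- The Links–Gould polynomial of the `(2,n)`-torus link via the closed formula. -/
noncomputable def LGtorus (n : ℕ) : MvPolynomial (Fin 2) ℤ :=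
  C ((-1 : ℤ) ^ (n - 1)) + ∑ k ∈ Finset.Icc 2 n,
    ((X 1) ^ (n - k) * X 0 * ∑ l ∈ Finset.range (k - 1), (X 0) ^ l * C ((-1 : ℤ) ^ (k - 2 - l))
      - (X 1) ^ (n - k + 1) * ∑ m ∈ Finset.range k, (X 0) ^ m * C ((-1 : ℤ) ^ (k - 1 - m)))

/-- The coefficient of `t₀^i t₁^j` in `LG(T(2,n))`, extended by zero to all of `ℤ²`. -/
noncomputable def torusCoeff (n : ℕ) (i j : ℤ) : ℤ :=
  if h : 0 ≤ i ∧ 0 ≤ j then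
    MvPolynomial.coeff (Finsupp.single 0 i.toNat + Finsupp.single 1 j.toNat) (LGtorus n)
  else 0

theorem LG_mono1 (a l : ℕ) (c : ℤ) :
    (X (1:Fin 2))^a * X 0 * ((X 0)^l * C c)
      = monomial (Finsupp.single 0 (l+1) + Finsupp.single 1 a) c := by
  rw [X_pow_eq_monomial, X_pow_eq_monomial, X, C_apply, monomial_mul, monomial_mul, monomial_mul,
    add_zero]
  have h : ((Finsupp.single (1:Fin 2) a + Finsupp.single 0 1) + Finsupp.single 0 l)
      = Finsupp.single 0 (l+1) + Finsupp.single 1 a := by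
    rw [add_assoc, ← Finsupp.single_add, add_comm, add_comm (1:ℕ) l]
  rw [h]; ring_nf

theorem LG_mono2 (a m : ℕ) (c : ℤ) :
    (X (1:Fin 2))^a * ((X 0)^m * C c)
      = monomial (Finsupp.single 0 m + Finsupp.single 1 a) c := by
  rw [X_pow_eq_monomial, X_pow_eq_monomial, C_apply, monomial_mul, monomial_mul, add_zero]
  rw [add_comm (Finsupp.single (1:Fin 2) a)]; ring_nf

theorem LG_dEq (a b i j : ℕ) :
    (Finsupp.single (0:Fin 2) a + Finsupp.single 1 b
      = Finsupp.single 0 i + Finsupp.single 1 j) ↔ (a = i ∧ b = j) := by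
  constructor
  · intro h
    refine ⟨?_, ?_⟩
    · have := DFunLike.congr_fun h 0; simpa using this
    · have := DFunLike.congr_fun h 1; simpa using this
  · rintro ⟨rfl, rfl⟩; rfl

theorem LG_dZero (i j : ℕ) :
    (Finsupp.single (0:Fin 2) i + Finsupp.single 1 j = 0) ↔ (i = 0 ∧ j = 0) := by
  constructor
  · intro h
    refine ⟨?_, ?_⟩
    · have := DFunLike.congr_fun h 0; simpa using this
    · have := DFunLike.congr_fun h 1; simpa using this
  · rintro ⟨rfl, rfl⟩; simp

theorem LG_dZero' (i j : ℕ) :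
    ((0:Fin 2 →₀ ℕ) = Finsupp.single 0 i + Finsupp.single 1 j) ↔ (i = 0 ∧ j = 0) := by
  rw [eq_comm, LG_dZero]

theorem LG_sum_ite_cond (K i : ℕ) (P : Prop) [Decidable P] (c : ℕ → ℤ) :
    ∑ m ∈ Finset.range K, (if (m = i ∧ P) then c m else 0)
      = if (i < K ∧ P) then c i else 0 := by
  by_cases hP : P
  · simp only [hP, and_true, Finset.sum_ite_eq', Finset.mem_range]
  · simp [hP]

theorem LG_sum_ite_cond' (K i j a : ℕ) (c : ℕ → ℤ) :
    ∑ l ∈ Finset.range K, (if (l + 1 = i ∧ a = j) then c l else 0)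
      = if (1 ≤ i ∧ i - 1 < K ∧ a = j) then c (i-1) else 0 := by
  rcases i with _ | i'
  · simp
  · simp only [Nat.add_right_cancel_iff, LG_sum_ite_cond]
    simp only [Nat.le_add_left, true_and, Nat.add_sub_cancel]

theorem coeff_LG (n : ℕ) (i j : ℕ) :
    MvPolynomial.coeff (Finsupp.single 0 i + Finsupp.single 1 j) (LGtorus n) =
      (if i = 0 ∧ j = 0 then (-1:ℤ)^(n-1) else 0)
      + ((if 1 ≤ i ∧ i + j + 1 ≤ n then (-1:ℤ)^(n-(i+j+1)) else 0)
         - (if 1 ≤ j ∧ j + 1 ≤ n ∧ i + j ≤ n then (-1:ℤ)^(n-(i+j)) else 0)) := by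
  rw [LGtorus, coeff_add, coeff_C, coeff_sum]
  simp only [Finset.mul_sum, LG_mono1, LG_mono2, coeff_sub, coeff_sum, coeff_monomial, LG_dEq,
    LG_sum_ite_cond, LG_sum_ite_cond']
  congr 1
  · simp only [LG_dZero']
  rw [Finset.sum_sub_distrib]
  congr 1
  · rw [Finset.sum_congr rfl (g := fun k => if k = n - j then
        (if 1 ≤ i ∧ i + j + 1 ≤ n then (-1:ℤ)^(n-(i+j+1)) else 0) else 0)
      (fun k hk => by
        simp only [Finset.mem_Icc] at hk
        split_ifs <;> first | rfl | (exfalso; omega) | (congr 1; omega))]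
    rw [Finset.sum_ite_eq']
    simp only [Finset.mem_Icc]
    split_ifs <;> first | rfl | (exfalso; omega)
  · rw [Finset.sum_congr rfl (g := fun k => if k = n + 1 - j then
        (if 1 ≤ j ∧ j + 1 ≤ n ∧ i + j ≤ n then (-1:ℤ)^(n-(i+j)) else 0) else 0)
      (fun k hk => by
        simp only [Finset.mem_Icc] at hk
        split_ifs <;> first | rfl | (exfalso; omega) | (congr 1; omega))]
    rw [Finset.sum_ite_eq']
    simp only [Finset.mem_Icc]
    split_ifs <;> first | rfl | (exfalso; omega)

theorem LG_abs_pow_neg_one (e : ℕ) : |(-1:ℤ)^e| = 1 := by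
  rw [abs_pow]; norm_num

theorem LG_two_case (a b : ℕ) (h : b = a + 1) : |(0:ℤ) + ((-1)^a - (-1)^b)| = 2 := by
  subst h
  rw [pow_succ, show (0:ℤ) + ((-1:ℤ)^a - (-1)^a * -1) = (-1)^a * 2 by ring, abs_mul, abs_pow]
  norm_num

theorem abs_coeff_LG (n : ℕ) (hn : 1 ≤ n) (i j : ℕ) :
    |MvPolynomial.coeff (Finsupp.single 0 i + Finsupp.single 1 j) (LGtorus n)| =
    if (j = 0 ∧ i + 1 ≤ n) ∨ (1 ≤ j ∧ j + 1 ≤ n ∧ i + j ≤ n) then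
      (if 1 ≤ i ∧ 1 ≤ j ∧ i + j + 1 ≤ n then 2 else 1) else 0 := by
  rw [coeff_LG]
  split_ifs <;>
    first
      | (exfalso; omega)
      | (rw [LG_two_case _ _ (by omega)])
      | simp [LG_abs_pow_neg_one]

theorem abs_torusCoeff (n : ℕ) (hn : 1 ≤ n) (i j : ℤ) :
    |torusCoeff n i j| =
    if 0 ≤ i ∧ 0 ≤ j ∧ ((j = 0 ∧ i + 1 ≤ (n:ℤ)) ∨ (1 ≤ j ∧ j + 1 ≤ (n:ℤ) ∧ i + j ≤ (n:ℤ))) then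
      (if 1 ≤ i ∧ 1 ≤ j ∧ i + j + 1 ≤ (n:ℤ) then 2 else 1) else 0 := by
  rw [torusCoeff]
  by_cases h : 0 ≤ i ∧ 0 ≤ j
  · rw [dif_pos h, abs_coeff_LG n hn]
    split_ifs <;> omega
  · rw [dif_neg h, abs_zero]
    split_ifs <;> omega

theorem LG_lc_aux (PA PB PM QA QB QM : Prop)
    [Decidable PA] [Decidable PB] [Decidable PM] [Decidable QA] [Decidable QB] [Decidable QM]
    (hS : PA → PB → PM) (hT : QA → PB → QM) (hT' : PA → QB → QM) :
    (if PA then (if QA then (2:ℤ) else 1) else 0) * (if PB then (if QB then 2 else 1) else 0)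
      ≤ (if PM then (if QM then 2 else 1) else 0)^2 := by
  split_ifs <;> first | tauto | norm_num

/-- The absolute values of the coefficients of `LG(T(2,n))` lie in `{0,1,2}` and
form a 2d log-concave two-indexed sequence. -/
theorem torus_coeffs_2d_logConcave (n : ℕ) (hn : 1 ≤ n) :
    (∀ i j : ℤ, |torusCoeff n i j| ∈ ({0, 1, 2} : Set ℤ)) ∧
    (∀ i j k l : ℤ,
      |torusCoeff n (i + k) (j + l)| * |torusCoeff n (i - k) (j - l)|
        ≤ |torusCoeff n i j| ^ 2) := by
  constructor
  · intro i j
    rw [abs_torusCoeff n hn]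
    split_ifs <;> simp
  · intro i j k l
    rw [abs_torusCoeff n hn, abs_torusCoeff n hn, abs_torusCoeff n hn]
    exact LG_lc_aux _ _ _ _ _ _ (by omega) (by omega) (by omega)
end

section
/- For the (2,n)-torus link with n ≥ 1, writing LG(T(2,n)) = Σ a_{ij} t₀^i t₁^j, the signs satisfy a_{ij} = (−1)^{μ+i+j+1}|a_{ij}| for all i,j, where μ = 1 if n is odd and μ = 2 if n is even (the number of components of T(2,n)). -/
open MvPolynomial

lemma coeff_XXC (d : Fin 2 →₀ ℕ) (a b : ℕ) (c : ℤ) :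
    MvPolynomial.coeff d ((X 1 : MvPolynomial (Fin 2) ℤ) ^ a * X 0 ^ b * C c)
      = if d 0 = b ∧ d 1 = a then c else 0 := by
  rw [X_pow_eq_monomial, X_pow_eq_monomial, monomial_mul, show (C c : MvPolynomial (Fin 2) ℤ)
    = monomial 0 c from rfl, monomial_mul, coeff_monomial]
  simp only [one_mul]
  congr 1
  simp only [eq_iff_iff]
  constructor
  · rintro rfl
    simp [Finsupp.single_apply]
  · rintro ⟨h0, h1⟩
    ext x
    fin_cases x <;> simp [Finsupp.single_apply, h0.symm, h1.symm]

lemma key (n : ℕ) (hn : 1 ≤ n) (d : Fin 2 →₀ ℕ) :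
    0 ≤ (-1 : ℤ) ^ (n + d 0 + d 1 + 1) * MvPolynomial.coeff d (LGtorus n) := by
  unfold LGtorus
  rw [coeff_add, coeff_sum, mul_add, Finset.mul_sum]
  apply add_nonneg
  · rw [coeff_C]
    split_ifs with h
    · have h0 : d 0 = 0 := by rw [← h]; rfl
      have h1 : d 1 = 0 := by rw [← h]; rfl
      rw [h0, h1, ← pow_add]
      have : Even (n + 0 + 0 + 1 + (n - 1)) := by
        rcases Nat.even_or_odd n with he | ho <;>
          [exact ⟨n, by omega⟩; exact ⟨n, by omega⟩]
      rw [this.neg_one_pow]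
      norm_num
    · simp
  · apply Finset.sum_nonneg
    intro k hk
    simp only [Finset.mem_Icc] at hk
    rw [coeff_sub]
    have hA : (X 1 : MvPolynomial (Fin 2) ℤ) ^ (n - k) * X 0
          * ∑ l ∈ Finset.range (k - 1), (X 0) ^ l * C ((-1 : ℤ) ^ (k - 2 - l))
        = ∑ l ∈ Finset.range (k - 1),
            (X 1 : MvPolynomial (Fin 2) ℤ) ^ (n - k) * X 0 ^ (l + 1) * C ((-1 : ℤ) ^ (k - 2 - l)) := by
      rw [Finset.mul_sum]
      refine Finset.sum_congr rfl fun l _ => ?_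
      ring
    have hB : (X 1 : MvPolynomial (Fin 2) ℤ) ^ (n - k + 1)
          * ∑ m ∈ Finset.range k, (X 0) ^ m * C ((-1 : ℤ) ^ (k - 1 - m))
        = ∑ m ∈ Finset.range k,
            (X 1 : MvPolynomial (Fin 2) ℤ) ^ (n - k + 1) * X 0 ^ m * C ((-1 : ℤ) ^ (k - 1 - m)) := by
      rw [Finset.mul_sum]
      refine Finset.sum_congr rfl fun m _ => ?_
      ring
    rw [hA, hB, mul_sub]
    have h1 : 0 ≤ (-1 : ℤ) ^ (n + d 0 + d 1 + 1) * MvPolynomial.coeff d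
        (∑ l ∈ Finset.range (k - 1),
          (X 1 : MvPolynomial (Fin 2) ℤ) ^ (n - k) * X 0 ^ (l + 1) * C ((-1 : ℤ) ^ (k - 2 - l))) := by
      rw [coeff_sum, Finset.mul_sum]
      apply Finset.sum_nonneg
      intro l hl
      simp only [Finset.mem_range] at hl
      rw [coeff_XXC]
      split_ifs with h
      · obtain ⟨h0, h1⟩ := h
        rw [h0, h1, ← pow_add]
        have : Even (n + (l + 1) + (n - k) + 1 + (k - 2 - l)) := ⟨n, by omega⟩
        rw [this.neg_one_pow]
        norm_num
      · simp
    have h2 : (-1 : ℤ) ^ (n + d 0 + d 1 + 1) * MvPolynomial.coeff d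
        (∑ m ∈ Finset.range k,
          (X 1 : MvPolynomial (Fin 2) ℤ) ^ (n - k + 1) * X 0 ^ m * C ((-1 : ℤ) ^ (k - 1 - m))) ≤ 0 := by
      rw [coeff_sum, Finset.mul_sum]
      apply Finset.sum_nonpos
      intro m hm
      simp only [Finset.mem_range] at hm
      rw [coeff_XXC]
      split_ifs with h
      · obtain ⟨h0, h1⟩ := h
        rw [h0, h1, ← pow_add]
        have : Odd (n + m + (n - k + 1) + 1 + (k - 1 - m)) := ⟨n, by omega⟩
        rw [this.neg_one_pow]
        norm_num
      · simp
    linarith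

/-- The signs of the coefficients of `LG(T(2,n))` alternate:
`a_{ij} = (−1)^{μ+i+j+1} |a_{ij}|`, where `μ` is the number of components. -/
theorem torus_coeffs_alternating (n : ℕ) (hn : 1 ≤ n)
    (μ : ℤ) (hμ : μ = if Odd n then 1 else 2) :
    ∀ i j : ℤ,
      torusCoeff n i j = ((μ + i + j + 1).negOnePow : ℤ) * |torusCoeff n i j| := by
  intro i j
  unfold torusCoeff
  split_ifs with h
  · obtain ⟨hi, hj⟩ := h
    set d : Fin 2 →₀ ℕ := Finsupp.single 0 i.toNat + Finsupp.single 1 j.toNat with hd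
    have hd0 : d 0 = i.toNat := by simp [hd, Finsupp.single_apply]
    have hd1 : d 1 = j.toNat := by simp [hd, Finsupp.single_apply]
    have hkey := key n hn d
    rw [hd0, hd1] at hkey
    set c := MvPolynomial.coeff d (LGtorus n) with hc
    have hpar : Even (μ + i + j + 1) ↔ Even (n + i.toNat + j.toNat + 1) := by
      rcases Nat.even_or_odd n with he | ho
      · rw [if_neg (Nat.not_odd_iff_even.mpr he)] at hμ
        rw [Int.even_iff, Nat.even_iff]
        rw [Nat.even_iff] at he
        omega
      · rw [if_pos ho] at hμ
        rw [Int.even_iff, Nat.even_iff]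
        rw [Nat.odd_iff] at ho
        omega
    rcases Nat.even_or_odd (n + i.toNat + j.toNat + 1) with he | ho
    · rw [he.neg_one_pow] at hkey
      rw [Int.negOnePow_even _ (hpar.mpr he)]
      rw [abs_of_nonneg (by linarith)]
      push_cast
      ring
    · rw [ho.neg_one_pow] at hkey
      rw [Int.negOnePow_odd _ (Int.not_even_iff_odd.mp fun hE => (Nat.not_even_iff_odd.mpr ho) (hpar.mp hE))]
      rw [abs_of_nonpos (by linarith)]
      push_cast
      ring
  · simp
end

section
/- For every integer l ≥ 1, the Laurent polynomial LG(K_{−l}) = 1 + (2−t₀−t₁−t₀⁻¹−t₁⁻¹+t₀t₁+t₀⁻¹t₁⁻¹)·Σ_{k=0}^{l−1}(t₀t₁)^k + (4−2t₀−2t₁−2t₀⁻¹−2t₁⁻¹+t₀t₁+t₀⁻¹t₁⁻¹+t₀t₁⁻¹+t₀⁻¹t₁)·Σ_{k=0}^{l−1}(2l−2k−1)(t₀t₁)^k, written as Σ a_{ij} t₀^i t₁^j, has coefficients satisfying a_{ij} = (−1)^{i+j}|a_{ij}| for all i, j. -/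
/-- The monomial `c · t₀^i t₁^j` in the ring of Laurent polynomials in two variables. -/
noncomputable def lmon (i j c : ℤ) : AddMonoidAlgebra ℤ (ℤ × ℤ) :=
  AddMonoidAlgebra.ofCoeff (Finsupp.single (i, j) c)

/-- The Links–Gould invariant of the twist knot `K_{-l}` (`l ≥ 1`), as a Laurent
polynomial in `t₀, t₁`. -/
noncomputable def LGtwistNeg (l : ℕ) : AddMonoidAlgebra ℤ (ℤ × ℤ) :=
  lmon 0 0 1
    + (lmon 0 0 2 - lmon 1 0 1 - lmon 0 1 1 - lmon (-1) 0 1 - lmon 0 (-1) 1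
        + lmon 1 1 1 + lmon (-1) (-1) 1)
      * ∑ k ∈ Finset.range l, lmon k k 1
    + (lmon 0 0 4 - lmon 1 0 2 - lmon 0 1 2 - lmon (-1) 0 2 - lmon 0 (-1) 2
        + lmon 1 1 1 + lmon (-1) (-1) 1 + lmon 1 (-1) 1 + lmon (-1) 1 1)
      * ∑ k ∈ Finset.range l, lmon k k (2 * l - 2 * k - 1)

/-- The sign character. -/
def chi (x : ℤ × ℤ) : ℤ := ((x.1 + x.2).negOnePow : ℤ)

lemma chi_add (a b : ℤ × ℤ) : chi (a + b) = chi a * chi b := by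
  unfold chi
  have : (a + b).1 + (a + b).2 = (a.1 + a.2) + (b.1 + b.2) := by
    simp [Prod.fst_add, Prod.snd_add]; ring
  rw [this, Int.negOnePow_add]
  push_cast
  ring

/-- The alternating-nonnegativity predicate. -/
def AltNN (p : AddMonoidAlgebra ℤ (ℤ × ℤ)) : Prop := ∀ x, 0 ≤ chi x * p.coeff x

lemma altNN_add {p q : AddMonoidAlgebra ℤ (ℤ × ℤ)} (hp : AltNN p) (hq : AltNN q) :
    AltNN (p + q) := by
  intro x
  have : chi x * (p + q).coeff x = chi x * p.coeff x + chi x * q.coeff x := by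
    rw [AddMonoidAlgebra.coeff_add, Finsupp.add_apply]; ring
  rw [this]
  exact add_nonneg (hp x) (hq x)

lemma altNN_single {a : ℤ × ℤ} {c : ℤ} (h : 0 ≤ chi a * c) :
    AltNN (AddMonoidAlgebra.ofCoeff (Finsupp.single a c)) := by
  intro x
  rw [AddMonoidAlgebra.coeff_ofCoeff, Finsupp.single_apply]
  split
  · next heq => subst heq; exact h
  · simp

lemma altNN_mul {p q : AddMonoidAlgebra ℤ (ℤ × ℤ)} (hp : AltNN p) (hq : AltNN q) :
    AltNN (p * q) := by
  classical
  intro x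
  rw [AddMonoidAlgebra.mul_apply]
  rw [Finsupp.sum, Finset.mul_sum]
  apply Finset.sum_nonneg
  intro a _
  rw [Finsupp.sum, Finset.mul_sum]
  apply Finset.sum_nonneg
  intro b _
  split
  · next heq =>
      subst heq
      have : chi (a + b) * (p.coeff a * q.coeff b) = (chi a * p.coeff a) * (chi b * q.coeff b) := by
        rw [chi_add]; ring
      rw [this]
      exact mul_nonneg (hp a) (hq b)
  · simp

lemma altNN_sum {s : Finset ℕ} {f : ℕ → AddMonoidAlgebra ℤ (ℤ × ℤ)}
    (h : ∀ k ∈ s, AltNN (f k)) : AltNN (∑ k ∈ s, f k) := by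
  classical
  induction s using Finset.induction_on with
  | empty => intro x; simp
  | insert a s hnot ih =>
      rw [Finset.sum_insert hnot]
      exact altNN_add (h _ (Finset.mem_insert_self _ _))
        (ih fun k hk => h k (Finset.mem_insert_of_mem hk))

lemma chi_diag (k : ℤ) : chi (k, k) = 1 := by
  unfold chi
  rw [show k + k = 2 * k by ring, Int.negOnePow_two_mul]
  simp

lemma altNN_lmon_diag (k c : ℤ) (hc : 0 ≤ c) : AltNN (lmon k k c) := by
  apply altNN_single
  rw [chi_diag]
  simpa using hc

lemma altNN_LG (l : ℕ) : AltNN (LGtwistNeg l) := by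
  unfold LGtwistNeg
  have hs : ∀ (i j c : ℤ), 0 ≤ chi (i, j) * c → AltNN (lmon i j c) :=
    fun i j c h => altNN_single h
  have e1 : ∀ (i j c : ℤ), -lmon i j c = lmon i j (-c) := by
    intro i j c; unfold lmon; rw [Finsupp.single_neg, AddMonoidAlgebra.ofCoeff_neg]
  apply altNN_add
  apply altNN_add
  · exact hs 0 0 1 (by simp [chi])
  · apply altNN_mul
    · rw [sub_eq_add_neg, sub_eq_add_neg, sub_eq_add_neg, sub_eq_add_neg, e1, e1, e1, e1]
      apply altNN_add; apply altNN_add; apply altNN_add; apply altNN_add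
      apply altNN_add; apply altNN_add
      · exact hs 0 0 2 (by simp [chi])
      · exact hs 1 0 (-1) (by simp [chi])
      · exact hs 0 1 (-1) (by simp [chi])
      · exact hs (-1) 0 (-1) (by simp [chi])
      · exact hs 0 (-1) (-1) (by simp [chi])
      · exact hs 1 1 1 (by simp [chi]; decide)
      · exact hs (-1) (-1) 1 (by simp [chi]; decide)
    · apply altNN_sum
      intro k _
      exact altNN_lmon_diag k 1 (by norm_num)
  · apply altNN_mul
    · rw [sub_eq_add_neg, sub_eq_add_neg, sub_eq_add_neg, sub_eq_add_neg, e1, e1, e1, e1]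
      apply altNN_add; apply altNN_add; apply altNN_add; apply altNN_add
      apply altNN_add; apply altNN_add; apply altNN_add; apply altNN_add
      · exact hs 0 0 4 (by simp [chi])
      · exact hs 1 0 (-2) (by simp [chi])
      · exact hs 0 1 (-2) (by simp [chi])
      · exact hs (-1) 0 (-2) (by simp [chi])
      · exact hs 0 (-1) (-2) (by simp [chi])
      · exact hs 1 1 1 (by simp [chi]; decide)
      · exact hs (-1) (-1) 1 (by simp [chi]; decide)
      · exact hs 1 (-1) 1 (by simp [chi])
      · exact hs (-1) 1 1 (by simp [chi])
    · apply altNN_sum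
      intro k hk
      apply altNN_lmon_diag
      have : (k : ℤ) ≤ l - 1 := by
        have := Finset.mem_range.mp hk
        omega
      omega

/-- The coefficients of `LG(K_{-l})` satisfy the alternating sign property
`a_{ij} = (−1)^{i+j} |a_{ij}|`. -/
theorem twist_neg_coeffs_alternating (l : ℕ) (hl : 1 ≤ l) :
    ∀ i j : ℤ,
      (LGtwistNeg l).coeff (i, j) = ((i + j).negOnePow : ℤ) * |(LGtwistNeg l).coeff (i, j)| := by
  intro i j
  have h := altNN_LG l (i, j)
  set c := (LGtwistNeg l).coeff (i, j) with hc
  have hchi : chi (i, j) = ((i + j).negOnePow : ℤ) := rfl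
  rw [hchi] at h
  rcases Int.even_or_odd (i + j) with he | ho
  · rw [Int.negOnePow_even _ he] at h ⊢
    simp only [Units.val_one, one_mul] at h ⊢
    exact (abs_of_nonneg h).symm
  · rw [Int.negOnePow_odd _ ho] at h ⊢
    simp only [Units.val_neg, Units.val_one, neg_one_mul, neg_nonneg] at h ⊢
    rw [abs_of_nonpos h]
    ring
end

section
/- If P(w₁,…,w_m) is a homogeneous polynomial of degree d with w_k⁻¹·P also a polynomial (every monomial of P is divisible by w_k), then N(P) is Lorentzian if and only if N(w_k⁻¹P) is Lorentzian. -/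
open MvPolynomial

/-- The normalization `N(Σ c_α w^α) = Σ (c_α/α!) w^α` of a polynomial. -/
noncomputable def normalizePoly {m : ℕ} (P : MvPolynomial (Fin m) ℝ) :
    MvPolynomial (Fin m) ℝ :=
  ∑ α ∈ P.support, monomial α (P.coeff α / ∏ i, ((α i).factorial : ℝ))

/-- M-convexity of a set of exponent vectors. -/
def MConvexSupport {m : ℕ} (S : Set (Fin m →₀ ℕ)) : Prop :=
  ∀ α ∈ S, ∀ β ∈ S, ∀ i : Fin m, β i < α i →
    ∃ j : Fin m, α j < β j ∧
      (α - Finsupp.single i 1 + Finsupp.single j 1) ∈ S ∧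
      (β - Finsupp.single j 1 + Finsupp.single i 1) ∈ S

/-- Iterated partial derivative `∂^γ = ∂_1^{γ_1} ⋯ ∂_m^{γ_m}`. -/
noncomputable def pderivMulti {m : ℕ} (γ : Fin m → ℕ) (P : MvPolynomial (Fin m) ℝ) :
    MvPolynomial (Fin m) ℝ :=
  (List.finRange m).foldr (fun i Q => (fun R => pderiv i R)^[γ i] Q) P

/-- The Hessian matrix of a polynomial (constant terms of the second derivatives;
for a quadratic form this is the usual Hessian). -/
noncomputable def hess {m : ℕ} (P : MvPolynomial (Fin m) ℝ) : Matrix (Fin m) (Fin m) ℝ :=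
  Matrix.of fun i j => MvPolynomial.coeff 0 (pderiv i (pderiv j P))

/-- A real symmetric matrix has at most one positive eigenvalue. -/
def AtMostOnePosEigenvalue {m : ℕ} (M : Matrix (Fin m) (Fin m) ℝ) : Prop :=
  ∀ hM : M.IsHermitian, (Finset.univ.filter fun i => 0 < hM.eigenvalues i).card ≤ 1

/-- A homogeneous polynomial of degree `d` is Lorentzian (Brändén–Huh): it has
nonnegative coefficients, M-convex support, and all its `(d-2)`-fold partial
derivatives are quadratics whose Hessians have at most one positive eigenvalue. -/
def Lorentzian {m : ℕ} (d : ℕ) (P : MvPolynomial (Fin m) ℝ) : Prop :=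
  P.IsHomogeneous d ∧ (∀ α, 0 ≤ P.coeff α) ∧
  MConvexSupport {α | P.coeff α ≠ 0} ∧
  ∀ γ : Fin m → ℕ, (∑ i, γ i) = d - 2 →
    AtMostOnePosEigenvalue (hess (pderivMulti γ P))

section AuxNL

variable {m : ℕ}

lemma coeff_pderiv (i : Fin m) (P : MvPolynomial (Fin m) ℝ) (β : Fin m →₀ ℕ) :
    (pderiv i P).coeff β = ((β i : ℝ) + 1) * P.coeff (β + Finsupp.single i 1) := by
  have hterm : ∀ s ∈ P.support,
      (if (s - Finsupp.single i 1) = β then P.coeff s * ((s i : ℕ) : ℝ) else 0)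
        = if s = β + Finsupp.single i 1 then ((β i : ℝ) + 1) * P.coeff s else 0 := by
    intro s hs
    by_cases h : s = β + Finsupp.single i 1
    · subst h
      have h1 : β + Finsupp.single i 1 - Finsupp.single i 1 = β := add_tsub_cancel_right _ _
      have h2 : ((β + Finsupp.single i 1 : Fin m →₀ ℕ) i) = β i + 1 := by
        simp [Finsupp.add_apply, Finsupp.single_apply]
      rw [if_pos h1, if_pos rfl, h2]
      push_cast
      ring
    · rw [if_neg h]
      split_ifs with h3
      · rcases Nat.eq_zero_or_pos (s i) with hsi | hsi
        · simp [hsi]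
        · exfalso
          apply h
          rw [← h3, tsub_add_cancel_of_le]
          rwa [Finsupp.single_le_iff]
      · rfl
  conv_lhs => rw [P.as_sum, map_sum]
  rw [coeff_sum]
  simp only [pderiv_monomial, coeff_monomial]
  rw [Finset.sum_congr rfl hterm, Finset.sum_ite_eq' P.support]
  by_cases h : β + Finsupp.single i 1 ∈ P.support
  · rw [if_pos h]
  · rw [if_neg h, MvPolynomial.notMem_support_iff.mp h, mul_zero]

lemma pderiv_comm' (i j : Fin m) (P : MvPolynomial (Fin m) ℝ) :
    pderiv i (pderiv j P) = pderiv j (pderiv i P) := by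
  by_cases h : i = j
  · subst h; rfl
  · apply MvPolynomial.ext
    intro β
    rw [coeff_pderiv, coeff_pderiv, coeff_pderiv, coeff_pderiv]
    have h1 : ((β + Finsupp.single i 1 : Fin m →₀ ℕ) j) = β j := by
      simp [Finsupp.add_apply, Finsupp.single_apply, h]
    have h2 : ((β + Finsupp.single j 1 : Fin m →₀ ℕ) i) = β i := by
      simp [Finsupp.add_apply, Finsupp.single_apply, Ne.symm h]
    rw [h1, h2, add_right_comm β (Finsupp.single i 1) (Finsupp.single j 1)]
    ring

lemma coeff_normalizePoly (P : MvPolynomial (Fin m) ℝ) (β : Fin m →₀ ℕ) :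
    (normalizePoly P).coeff β = P.coeff β / ∏ i, ((β i).factorial : ℝ) := by
  unfold normalizePoly
  rw [coeff_sum]
  simp only [coeff_monomial]
  have hterm : ∀ s ∈ P.support,
      (if s = β then P.coeff s / ∏ i, ((s i).factorial : ℝ) else 0)
        = if s = β then P.coeff β / ∏ i, ((β i).factorial : ℝ) else 0 := by
    intro s _
    split_ifs with h
    · rw [h]
    · rfl
  rw [Finset.sum_congr rfl hterm, Finset.sum_ite_eq' P.support]
  by_cases h : β ∈ P.support
  · rw [if_pos h]
  · rw [if_neg h, MvPolynomial.notMem_support_iff.mp h, zero_div]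

lemma factorial_prod_pos (β : Fin m →₀ ℕ) : 0 < ∏ i, ((β i).factorial : ℝ) := by
  apply Finset.prod_pos
  intro i _
  exact_mod_cast (β i).factorial_pos

lemma coeff_normalizePoly_ne_zero_iff (P : MvPolynomial (Fin m) ℝ) (β : Fin m →₀ ℕ) :
    (normalizePoly P).coeff β ≠ 0 ↔ P.coeff β ≠ 0 := by
  rw [coeff_normalizePoly]
  constructor
  · intro h h0
    exact h (by rw [h0, zero_div])
  · intro h
    exact div_ne_zero h (ne_of_gt (factorial_prod_pos β))

lemma normalizePoly_isHomogeneous {d : ℕ} {P : MvPolynomial (Fin m) ℝ}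
    (h : P.IsHomogeneous d) : (normalizePoly P).IsHomogeneous d := by
  intro β hβ
  exact h ((coeff_normalizePoly_ne_zero_iff P β).mp hβ)

lemma pderiv_foldr_comm (γ : Fin m → ℕ) (k : Fin m) (L : List (Fin m))
    (Q : MvPolynomial (Fin m) ℝ) :
    pderiv k (L.foldr (fun i Q => (fun R => pderiv i R)^[γ i] Q) Q)
      = L.foldr (fun i Q => (fun R => pderiv i R)^[γ i] Q) (pderiv k Q) := by
  induction L with
  | nil => rfl
  | cons i T ih =>
    simp only [List.foldr_cons]
    have hc : Function.Commute (fun R => pderiv k R) (fun R => pderiv i R) :=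
      fun R => pderiv_comm' k i R
    exact ((hc.iterate_right (γ i)) _).trans (congrArg _ ih)

lemma foldr_congr {γ γ' : Fin m → ℕ} (L : List (Fin m)) (h : ∀ i ∈ L, γ i = γ' i)
    (Q : MvPolynomial (Fin m) ℝ) :
    L.foldr (fun i Q => (fun R => pderiv i R)^[γ i] Q) Q
      = L.foldr (fun i Q => (fun R => pderiv i R)^[γ' i] Q) Q := by
  induction L with
  | nil => rfl
  | cons i T ih =>
    simp only [List.foldr_cons]
    rw [h i (List.mem_cons_self), ih fun j hj => h j (List.mem_cons_of_mem i hj)]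

lemma foldr_update (γ : Fin m → ℕ) (k : Fin m) (L : List (Fin m)) (hL : L.Nodup)
    (hk : k ∈ L) (Q : MvPolynomial (Fin m) ℝ) :
    L.foldr (fun i Q => (fun R => pderiv i R)^[Function.update γ k (γ k + 1) i] Q) Q
      = pderiv k (L.foldr (fun i Q => (fun R => pderiv i R)^[γ i] Q) Q) := by
  induction L with
  | nil => exact absurd hk (fun h => List.not_mem_nil h)
  | cons i T ih =>
    rw [List.nodup_cons] at hL
    simp only [List.foldr_cons]
    by_cases hik : i = k
    · subst hik
      have hnT : i ∉ T := hL.1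
      rw [foldr_congr (γ' := γ) T (fun j hj => Function.update_of_ne
        (fun e => hnT (by rw [← e]; exact hj)) _ _) Q]
      rw [Function.update_self, Function.iterate_succ_apply']
    · rw [Function.update_of_ne hik]
      rw [ih hL.2 ((List.mem_cons.mp hk).resolve_left (fun e => hik e.symm))]
      have hc : Function.Commute (fun R => pderiv i R) (fun R => pderiv k R) :=
        fun R => pderiv_comm' i k R
      exact ((hc.iterate_left (γ i)) _)

lemma pderivMulti_update (γ : Fin m → ℕ) (k : Fin m) (Q : MvPolynomial (Fin m) ℝ) :
    pderivMulti (Function.update γ k (γ k + 1)) Q = pderivMulti γ (pderiv k Q) := by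
  unfold pderivMulti
  rw [foldr_update γ k _ (List.nodup_finRange m) (List.mem_finRange k) Q,
    pderiv_foldr_comm]

lemma coeff_iterate (i : Fin m) (n : ℕ) :
    ∀ (Q : MvPolynomial (Fin m) ℝ) (β : Fin m →₀ ℕ), ∃ C : ℝ, 0 < C ∧
      ((fun R => pderiv i R)^[n] Q).coeff β = C * Q.coeff (β + Finsupp.single i n) := by
  induction n with
  | zero => exact fun Q β => ⟨1, one_pos, by simp⟩
  | succ n ih =>
    intro Q β
    obtain ⟨C, hC, h⟩ := ih (pderiv i Q) β
    refine ⟨C * (((β + Finsupp.single i n : Fin m →₀ ℕ) i : ℝ) + 1), by positivity, ?_⟩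
    rw [Function.iterate_succ_apply, h, coeff_pderiv]
    have he : β + Finsupp.single i n + Finsupp.single i 1
        = β + Finsupp.single i (n + 1) := by
      rw [add_assoc, ← Finsupp.single_add]
    rw [he]
    ring

lemma coeff_foldr (γ : Fin m → ℕ) (L : List (Fin m)) :
    ∀ (Q : MvPolynomial (Fin m) ℝ) (β : Fin m →₀ ℕ), ∃ C : ℝ, 0 < C ∧
      (L.foldr (fun i Q => (fun R => pderiv i R)^[γ i] Q) Q).coeff β
        = C * Q.coeff (β + (L.map fun i => Finsupp.single i (γ i)).sum) := by
  induction L with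
  | nil => exact fun Q β => ⟨1, one_pos, by simp⟩
  | cons i T ih =>
    intro Q β
    obtain ⟨C, hC, h⟩ := coeff_iterate i (γ i)
      (T.foldr (fun i Q => (fun R => pderiv i R)^[γ i] Q) Q) β
    obtain ⟨C', hC', h'⟩ := ih Q (β + Finsupp.single i (γ i))
    refine ⟨C * C', by positivity, ?_⟩
    simp only [List.foldr_cons, List.map_cons, List.sum_cons]
    rw [h, h', mul_assoc, ← add_assoc]

lemma coeff_pderivMulti (γ : Fin m → ℕ) (Q : MvPolynomial (Fin m) ℝ) (β : Fin m →₀ ℕ) :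
    ∃ C : ℝ, 0 < C ∧ (pderivMulti γ Q).coeff β
      = C * Q.coeff (β + Finsupp.equivFunOnFinite.symm γ) := by
  obtain ⟨C, hC, h⟩ := coeff_foldr γ (List.finRange m) Q β
  refine ⟨C, hC, ?_⟩
  have hsum : ((List.finRange m).map fun i => Finsupp.single i (γ i)).sum
      = Finsupp.equivFunOnFinite.symm γ := by
    rw [← Fin.sum_univ_def]
    ext j
    rw [Finset.sum_apply']
    simp only [Finsupp.single_apply, Finsupp.coe_equivFunOnFinite_symm]
    rw [Finset.sum_ite_eq' Finset.univ j γ, if_pos (Finset.mem_univ j)]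
  rw [pderivMulti, h, hsum]

lemma hess_pderivMulti (γ : Fin m → ℕ) (Q : MvPolynomial (Fin m) ℝ) (i j : Fin m) :
    ∃ C : ℝ, 0 < C ∧ hess (pderivMulti γ Q) i j
      = C * Q.coeff (Finsupp.single i 1 + Finsupp.single j 1
          + Finsupp.equivFunOnFinite.symm γ) := by
  obtain ⟨C, hC, h⟩ := coeff_pderivMulti γ Q (Finsupp.single i 1 + Finsupp.single j 1)
  refine ⟨(((Finsupp.single i 1 : Fin m →₀ ℕ) j : ℝ) + 1) * C, by positivity, ?_⟩
  show MvPolynomial.coeff 0 (pderiv i (pderiv j (pderivMulti γ Q))) = _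
  rw [show (MvPolynomial.coeff 0 (pderiv i (pderiv j (pderivMulti γ Q))))
    = (pderiv i (pderiv j (pderivMulti γ Q))).coeff 0 from rfl]
  rw [coeff_pderiv, coeff_pderiv]
  simp only [Finsupp.coe_zero, Pi.zero_apply, Nat.cast_zero, zero_add]
  rw [h]
  ring

lemma deg_sum (x : Fin m →₀ ℕ) : Finsupp.degree x = ∑ i, x i :=
  Finset.sum_subset (Finset.subset_univ _)
    (fun i _ h => Finsupp.notMem_support_iff.mp h)

lemma sum_single_one (i : Fin m) : ∑ x, (Finsupp.single i 1 : Fin m →₀ ℕ) x = 1 := by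
  simp only [Finsupp.single_apply]
  rw [Finset.sum_ite_eq Finset.univ i (fun _ => 1), if_pos (Finset.mem_univ i)]

lemma hess_zero_of_degree {d : ℕ} {Q : MvPolynomial (Fin m) ℝ} (hQ : Q.IsHomogeneous d)
    (γ : Fin m → ℕ) (h : ∑ i, γ i + 2 ≠ d) : hess (pderivMulti γ Q) = 0 := by
  ext i j
  obtain ⟨C, hC, he⟩ := hess_pderivMulti γ Q i j
  rw [Matrix.zero_apply, he, hQ.coeff_eq_zero, mul_zero]
  rw [deg_sum]
  simp only [Finsupp.add_apply, Finset.sum_add_distrib, sum_single_one,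
    Finsupp.coe_equivFunOnFinite_symm]
  omega

lemma keyLA (k : Fin m) (H : Matrix (Fin m) (Fin m) ℝ)
    (h0 : ∀ i j, i ≠ k → j ≠ k → H i j = 0) : AtMostOnePosEigenvalue H := by
  intro hM
  by_contra hc
  rw [not_le] at hc
  rw [Finset.one_lt_card] at hc
  obtain ⟨a, ha, b, hb, hab⟩ := hc
  rw [Finset.mem_filter] at ha hb
  set u : Fin m → ℝ := ⇑(hM.eigenvectorBasis a) with hu
  set v : Fin m → ℝ := ⇑(hM.eigenvectorBasis b) with hv
  obtain ⟨s, t, hst, hk0⟩ : ∃ s t : ℝ, ¬(s = 0 ∧ t = 0) ∧ s * u k + t * v k = 0 := by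
    by_cases h : u k = 0
    · exact ⟨1, 0, by simp, by simp [h]⟩
    · exact ⟨v k, -(u k), fun hh => h (neg_eq_zero.mp hh.2), by ring⟩
  set x : Fin m → ℝ := fun i => s * u i + t * v i with hx
  have hxk : x k = 0 := hk0
  have hq0 : dotProduct x (H.mulVec x) = 0 := by
    rw [dotProduct]
    apply Finset.sum_eq_zero
    intro i _
    by_cases hik : i = k
    · rw [hik, hxk, zero_mul]
    · rw [show H.mulVec x i = ∑ j, H i j * x j from rfl, Finset.mul_sum]
      apply Finset.sum_eq_zero
      intro j _
      by_cases hjk : j = k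
      · rw [hjk, hxk, mul_zero, mul_zero]
      · rw [h0 i j hik hjk, zero_mul, mul_zero]
  have hid : ∀ p q : Fin m, dotProduct (⇑(hM.eigenvectorBasis p) : Fin m → ℝ)
      (⇑(hM.eigenvectorBasis q)) = if p = q then 1 else 0 := by
    intro p q
    have := orthonormal_iff_ite.mp hM.eigenvectorBasis.orthonormal p q
    rw [← this]
    rw [dotProduct]
    rw [PiLp.inner_apply]
    simp [RCLike.inner_apply, starRingEnd_apply, mul_comm]
  have hHu : H.mulVec u = hM.eigenvalues a • u := hM.mulVec_eigenvectorBasis a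
  have hHv : H.mulVec v = hM.eigenvalues b • v := hM.mulVec_eigenvectorBasis b
  have hxsum : x = s • u + t • v := rfl
  have hq : dotProduct x (H.mulVec x)
      = s * s * hM.eigenvalues a + t * t * hM.eigenvalues b := by
    rw [hxsum, Matrix.mulVec_add, Matrix.mulVec_smul, Matrix.mulVec_smul, hHu, hHv]
    simp only [dotProduct_add, add_dotProduct, smul_dotProduct,
      dotProduct_smul, smul_eq_mul, hu, hv, hid]
    simp only [if_pos rfl, if_neg hab, if_neg (Ne.symm hab), if_true, one_mul, mul_one]
    ring
  rw [hq0] at hq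
  have hla : 0 < hM.eigenvalues a := ha.2
  have hlb : 0 < hM.eigenvalues b := hb.2
  rcases not_and_or.mp hst with hs | ht
  · have h1 : 0 < s * s := mul_self_pos.mpr hs
    have h2 : 0 ≤ t * t := mul_self_nonneg t
    nlinarith
  · have h1 : 0 < t * t := mul_self_pos.mpr ht
    have h2 : 0 ≤ s * s := mul_self_nonneg s
    nlinarith

lemma fs1 (a : Fin m →₀ ℕ) (i j k : Fin m) (h : 1 ≤ a i) :
    (a - Finsupp.single i 1 + Finsupp.single j 1) + Finsupp.single k 1
      = (a + Finsupp.single k 1) - Finsupp.single i 1 + Finsupp.single j 1 := by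
  ext x
  simp only [Finsupp.add_apply, Finsupp.tsub_apply, Finsupp.single_apply]
  rcases eq_or_ne i x with rfl | hix
  · simp only [if_pos rfl]
    split_ifs <;> omega
  · simp only [if_neg (fun e => hix e)]
    split_ifs <;> omega

lemma fs2 (a : Fin m →₀ ℕ) (k : Fin m) (h : 1 ≤ a k) :
    a - Finsupp.single k 1 + Finsupp.single k 1 = a := by
  ext x
  simp only [Finsupp.add_apply, Finsupp.tsub_apply, Finsupp.single_apply]
  rcases eq_or_ne k x with rfl | hkx
  · split_ifs <;> omega
  · simp only [if_neg hkx]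
    omega

lemma normalize_div_eq (P : MvPolynomial (Fin m) ℝ) (k : Fin m)
    (hdiv : ∀ α ∈ P.support, 1 ≤ α k) :
    normalizePoly (∑ α ∈ P.support, monomial (α - Finsupp.single k 1) (P.coeff α))
      = pderiv k (normalizePoly P) := by
  apply MvPolynomial.ext
  intro β
  have hc : (∑ α ∈ P.support, monomial (α - Finsupp.single k 1) (P.coeff α)).coeff β
      = P.coeff (β + Finsupp.single k 1) := by
    rw [coeff_sum]
    simp only [coeff_monomial]
    have hterm : ∀ s ∈ P.support,
        (if (s - Finsupp.single k 1) = β then P.coeff s else 0)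
          = if s = β + Finsupp.single k 1 then P.coeff s else 0 := by
      intro s hs
      have h1 := hdiv s hs
      refine if_congr ⟨?_, ?_⟩ rfl rfl
      · intro h3
        rw [← h3, tsub_add_cancel_of_le (Finsupp.single_le_iff.mpr h1)]
      · intro h3
        rw [h3, add_tsub_cancel_right]
    rw [Finset.sum_congr rfl hterm, Finset.sum_ite_eq' P.support]
    by_cases h : β + Finsupp.single k 1 ∈ P.support
    · rw [if_pos h]
    · rw [if_neg h, MvPolynomial.notMem_support_iff.mp h]
  rw [coeff_normalizePoly, _root_.coeff_pderiv, coeff_normalizePoly, hc]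
  have hfac : ∏ i, (((β + Finsupp.single k 1 : Fin m →₀ ℕ) i).factorial : ℝ)
      = ((β k : ℝ) + 1) * ∏ i, ((β i).factorial : ℝ) := by
    have hfun : (fun i => (((β + Finsupp.single k 1 : Fin m →₀ ℕ) i).factorial : ℝ))
        = Function.update (fun i => ((β i).factorial : ℝ)) k (((β k + 1).factorial : ℝ)) := by
      funext x
      rcases eq_or_ne x k with rfl | hxk
      · simp [Function.update_self, Finsupp.add_apply, Finsupp.single_apply]
      · rw [Function.update_of_ne hxk]
        have hax : ((β + Finsupp.single k 1 : Fin m →₀ ℕ) x) = β x := by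
          simp only [Finsupp.add_apply, Finsupp.single_apply, if_neg (Ne.symm hxk), add_zero]
        rw [hax]
    rw [hfun, Finset.prod_update_of_mem (Finset.mem_univ k)]
    rw [← Finset.prod_erase_mul Finset.univ _ (Finset.mem_univ k)]
    rw [Finset.sdiff_singleton_eq_erase]
    rw [Nat.factorial_succ]
    push_cast
    ring
  rw [hfac]
  have hb : (0:ℝ) < ∏ i, ((β i).factorial : ℝ) := factorial_prod_pos β
  have hk1 : (0:ℝ) < (β k : ℝ) + 1 := by positivity
  field_simp

lemma isHomogeneous_of (P : MvPolynomial (Fin m) ℝ) (n : ℕ)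
    (h : ∀ δ : Fin m →₀ ℕ, P.coeff δ ≠ 0 → Finsupp.degree δ = n) :
    P.IsHomogeneous n := by
  intro δ hδ
  rw [show (Finsupp.weight (1 : Fin m → ℕ)) = Finsupp.weight (fun _ => 1) from rfl,
    ← Finsupp.degree_eq_weight_one]
  exact h δ hδ

lemma sum_add_single (β : Fin m →₀ ℕ) (k : Fin m) :
    ∑ i, (β + Finsupp.single k 1 : Fin m →₀ ℕ) i = (∑ i, β i) + 1 := by
  simp only [Finsupp.add_apply, Finset.sum_add_distrib, sum_single_one]

lemma main_iff {d : ℕ} (Q : MvPolynomial (Fin m) ℝ) (k : Fin m)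
    (hQ : Q.IsHomogeneous d) (hk : ∀ α : Fin m →₀ ℕ, Q.coeff α ≠ 0 → 1 ≤ α k) :
    Lorentzian d Q ↔ Lorentzian (d - 1) (pderiv k Q) := by
  have hdeg : ∀ δ : Fin m →₀ ℕ, Q.coeff δ ≠ 0 → ∑ i, δ i = d := by
    intro δ h
    by_contra hne
    exact h (hQ.coeff_eq_zero (by rw [deg_sum]; exact hne))
  have hiff : ∀ β : Fin m →₀ ℕ,
      (pderiv k Q).coeff β ≠ 0 ↔ Q.coeff (β + Finsupp.single k 1) ≠ 0 := by
    intro β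
    rw [coeff_pderiv]
    constructor
    · exact fun h => right_ne_zero_of_mul h
    · intro h
      exact mul_ne_zero (by positivity) h
  constructor
  · rintro ⟨h1, h2, h3, h4⟩
    refine ⟨?_, ?_, ?_, ?_⟩
    · apply isHomogeneous_of
      intro β hβ
      have h5 := hdeg _ ((hiff β).mp hβ)
      rw [sum_add_single] at h5
      rw [deg_sum]
      omega
    · intro β
      rw [coeff_pderiv]
      exact mul_nonneg (by positivity) (h2 _)
    · intro α' hα' β' hβ' i hi
      have hα : Q.coeff (α' + Finsupp.single k 1) ≠ 0 := (hiff α').mp hα'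
      have hβ : Q.coeff (β' + Finsupp.single k 1) ≠ 0 := (hiff β').mp hβ'
      have hi2 : (β' + Finsupp.single k 1 : Fin m →₀ ℕ) i
          < (α' + Finsupp.single k 1 : Fin m →₀ ℕ) i := by
        simp only [Finsupp.add_apply]
        omega
      obtain ⟨j, hj1, hj2, hj3⟩ :=
        h3 (α' + Finsupp.single k 1) hα (β' + Finsupp.single k 1) hβ i hi2
      simp only [Finsupp.add_apply] at hj1
      have hj1' : α' j < β' j := by omega
      have h1i : 1 ≤ α' i := by omega
      have h1j : 1 ≤ β' j := by omega
      refine ⟨j, hj1', ?_, ?_⟩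
      · show (pderiv k Q).coeff _ ≠ 0
        rw [hiff, fs1 α' i j k h1i]
        exact hj2
      · show (pderiv k Q).coeff _ ≠ 0
        rw [hiff, fs1 β' j i k h1j]
        exact hj3
    · intro γ hγ
      have key : pderivMulti γ (pderiv k Q)
          = pderivMulti (Function.update γ k (γ k + 1)) Q :=
        (pderivMulti_update γ k Q).symm
      have hsum : ∑ i, Function.update γ k (γ k + 1) i = (∑ i, γ i) + 1 := by
        rw [Finset.sum_update_of_mem (Finset.mem_univ k), Finset.sdiff_singleton_eq_erase]
        have h8 : ∑ i, γ i = γ k + ∑ i ∈ Finset.univ.erase k, γ i :=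
          (Finset.add_sum_erase _ γ (Finset.mem_univ k)).symm
        omega
      by_cases hc : (∑ i, Function.update γ k (γ k + 1) i) = d - 2
      · rw [key]
        exact h4 _ hc
      · rw [key, hess_zero_of_degree hQ _ (by omega)]
        apply keyLA k
        intro i j _ _
        simp
  · rintro ⟨h1, h2, h3, h4⟩
    refine ⟨hQ, ?_, ?_, ?_⟩
    · intro α
      by_cases hαk : 1 ≤ α k
      · have he : (α - Finsupp.single k 1) + Finsupp.single k 1 = α := fs2 α k hαk
        have h5 := h2 (α - Finsupp.single k 1)
        rw [coeff_pderiv, he] at h5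
        have hpos : (0:ℝ) < ((α - Finsupp.single k 1 : Fin m →₀ ℕ) k : ℝ) + 1 := by
          positivity
        by_contra hneg
        have h6 : (((α - Finsupp.single k 1 : Fin m →₀ ℕ) k : ℝ) + 1) * Q.coeff α < 0 :=
          mul_neg_of_pos_of_neg hpos (lt_of_not_ge hneg)
        linarith
      · by_contra hne
        have h5 : Q.coeff α ≠ 0 := fun h0 => by rw [h0] at hne; exact hne le_rfl
        exact hαk (hk α h5)
    · intro α hα β hβ i hi
      have hαk := hk α hα
      have hβk := hk β hβ
      have hα' : (pderiv k Q).coeff (α - Finsupp.single k 1) ≠ 0 := by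
        rw [hiff, fs2 α k hαk]
        exact hα
      have hβ' : (pderiv k Q).coeff (β - Finsupp.single k 1) ≠ 0 := by
        rw [hiff, fs2 β k hβk]
        exact hβ
      have hred : ∀ (x : Fin m →₀ ℕ) (y : Fin m),
          (x - Finsupp.single k 1 : Fin m →₀ ℕ) y = if k = y then x y - 1 else x y := by
        intro x y
        rw [Finsupp.tsub_apply]
        rcases eq_or_ne k y with rfl | h
        · rw [Finsupp.single_eq_same, if_pos rfl]
        · rw [Finsupp.single_eq_of_ne' h, if_neg h, tsub_zero]
      have hi2 : (β - Finsupp.single k 1 : Fin m →₀ ℕ) i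
          < (α - Finsupp.single k 1 : Fin m →₀ ℕ) i := by
        rw [hred β i, hred α i]
        split_ifs with h
        · subst h
          omega
        · omega
      obtain ⟨j, hj1, hj2, hj3⟩ :=
        h3 (α - Finsupp.single k 1) hα' (β - Finsupp.single k 1) hβ' i hi2
      have hj1' : α j < β j := by
        revert hj1
        rw [hred α j, hred β j]
        split_ifs with h
        · subst h
          omega
        · omega
      have hai : 1 ≤ (α - Finsupp.single k 1 : Fin m →₀ ℕ) i := by
        rw [hred α i]
        split_ifs with h
        · subst h
          omega
        · omega
      have hbj : 1 ≤ (β - Finsupp.single k 1 : Fin m →₀ ℕ) j := by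
        rw [hred β j]
        split_ifs with h
        · subst h
          omega
        · omega
      have hea : ((α - Finsupp.single k 1) - Finsupp.single i 1 + Finsupp.single j 1)
          + Finsupp.single k 1 = α - Finsupp.single i 1 + Finsupp.single j 1 := by
        rw [fs1 _ i j k hai, fs2 α k hαk]
      have heb : ((β - Finsupp.single k 1) - Finsupp.single j 1 + Finsupp.single i 1)
          + Finsupp.single k 1 = β - Finsupp.single j 1 + Finsupp.single i 1 := by
        rw [fs1 _ j i k hbj, fs2 β k hβk]
      refine ⟨j, hj1', ?_, ?_⟩
      · show Q.coeff _ ≠ 0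
        rw [← hea]
        exact (hiff _).mp hj2
      · show Q.coeff _ ≠ 0
        rw [← heb]
        exact (hiff _).mp hj3
    · intro γ hγ
      by_cases hγk : 1 ≤ γ k
      · have hupd : Function.update (Function.update γ k (γ k - 1)) k
            (Function.update γ k (γ k - 1) k + 1) = γ := by
          funext x
          rcases eq_or_ne x k with rfl | hxk
          · simp only [Function.update_self]
            omega
          · simp only [Function.update_of_ne hxk]
        have key := pderivMulti_update (Function.update γ k (γ k - 1)) k Q
        rw [hupd] at key
        rw [key]
        apply h4
        have h8 : ∑ i, γ i = γ k + ∑ i ∈ Finset.univ.erase k, γ i :=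
          (Finset.add_sum_erase _ γ (Finset.mem_univ k)).symm
        have h9 : ∑ i, Function.update γ k (γ k - 1) i
            = (γ k - 1) + ∑ i ∈ Finset.univ.erase k, γ i := by
          rw [Finset.sum_update_of_mem (Finset.mem_univ k), Finset.sdiff_singleton_eq_erase]
        omega
      · apply keyLA k
        intro i j hik hjk
        obtain ⟨C, hC, he⟩ := hess_pderivMulti γ Q i j
        rw [he]
        convert mul_zero C
        by_contra hne
        have h5 := hk _ hne
        simp only [Finsupp.add_apply, Finsupp.single_apply,
          Finsupp.coe_equivFunOnFinite_symm, if_neg hik, if_neg hjk] at h5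
        omega

end AuxNL

/-- If every monomial of the homogeneous polynomial `P` is divisible by `w_k`,
then `N(P)` is Lorentzian iff `N(w_k⁻¹ P)` is Lorentzian. -/
theorem normalization_lorentzian_div {m d : ℕ}
    (P : MvPolynomial (Fin m) ℝ) (hP : P.IsHomogeneous d)
    (k : Fin m) (hdiv : ∀ α ∈ P.support, 1 ≤ α k)
    (Pdiv : MvPolynomial (Fin m) ℝ)
    (hPdiv : Pdiv = ∑ α ∈ P.support, monomial (α - Finsupp.single k 1) (P.coeff α)) :
    Lorentzian d (normalizePoly P) ↔ Lorentzian (d - 1) (normalizePoly Pdiv) := by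
  subst hPdiv
  rw [normalize_div_eq P k hdiv]
  apply main_iff _ k (normalizePoly_isHomogeneous hP)
  intro α hα
  exact hdiv α (MvPolynomial.mem_support_iff.mpr
    ((coeff_normalizePoly_ne_zero_iff P α).mp hα))
end

section
/- For a one-variable polynomial P with nonnegative real coefficients and nonzero leading coefficient of degree d, the sequence of coefficients of P is log-concave if and only if the normalized homogenization N(Homog(P)) is a Lorentzian polynomial in two variables. -/
open MvPolynomial

noncomputable def myQ (d : ℕ) (c : ℕ → ℝ) : MvPolynomial (Fin 2) ℝ :=
  ∑ k ∈ Finset.range (d + 1),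
      monomial (Finsupp.single 0 k + Finsupp.single 1 (d - k))
        (c k / ((k.factorial : ℝ) * ((d - k).factorial : ℝ)))



lemma my_coeff_pderiv {m : ℕ} (i : Fin m) (f : MvPolynomial (Fin m) ℝ) (mo : Fin m →₀ ℕ) :
    coeff mo (pderiv i f) = (mo i + 1 : ℝ) * coeff (mo + Finsupp.single i 1) f := by
  induction f using MvPolynomial.induction_on' with
  | monomial s a =>
    rw [pderiv_monomial, coeff_monomial, coeff_monomial]
    split_ifs with h1 h2 h2
    · -- s - single i 1 = mo and s = mo + single i 1
      subst h2
      simp [Finsupp.add_apply, Finsupp.single_apply, mul_comm, mul_add]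

    · -- s - single i 1 = mo but s ≠ mo + single i 1 : then s i = 0
      by_cases hsi : s i = 0
      · simp [hsi]
      · exfalso; apply h2
        have hle : Finsupp.single i 1 ≤ s := by
          rw [Finsupp.single_le_iff]; omega
        rw [← h1, tsub_add_cancel_of_le hle]
    · exfalso; apply h1; subst h2; ext x
      by_cases hx : x = i
      · subst hx; simp [Finsupp.single_apply]
      · simp [Finsupp.single_apply, hx]
    · ring
  | add p q hp hq => simp [map_add, coeff_add, hp, hq]; ring

lemma my_coeff_pderiv_iterate {m : ℕ} (i : Fin m) (n : ℕ) (f : MvPolynomial (Fin m) ℝ)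
    (mo : Fin m →₀ ℕ) :
    coeff mo ((fun R => pderiv i R)^[n] f) =
      ((mo i + n).descFactorial n : ℝ) * coeff (mo + Finsupp.single i n) f := by
  induction n generalizing f mo with
  | zero => simp
  | succ n ih =>
    rw [Function.iterate_succ_apply', my_coeff_pderiv, ih]
    have h1 : ((mo + Finsupp.single i 1 : Fin m →₀ ℕ)) i = mo i + 1 := by simp
    have h2 : mo + Finsupp.single i 1 + Finsupp.single i n = mo + Finsupp.single i (n + 1) := by
      rw [add_assoc, ← Finsupp.single_add, add_comm 1 n]
    rw [h1, h2]
    have : (mo i + (n + 1)).descFactorial (n + 1) = (mo i + 1) * ((mo i + 1 + n).descFactorial n) := by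
      rw [show mo i + (n+1) = mo i + 1 + n by omega, Nat.descFactorial_succ,
        show mo i + 1 + n - n = mo i + 1 by omega]
    rw [this]
    push_cast
    ring

lemma mu_apply0 (k l : ℕ) : ((Finsupp.single (0:Fin 2) k + Finsupp.single 1 l : Fin 2 →₀ ℕ)) 0 = k := by
  simp [Finsupp.single_apply]

lemma mu_apply1 (k l : ℕ) : ((Finsupp.single (0:Fin 2) k + Finsupp.single 1 l : Fin 2 →₀ ℕ)) 1 = l := by
  simp [Finsupp.single_apply]

lemma mu_inj {k l k' l' : ℕ} (h : (Finsupp.single (0:Fin 2) k + Finsupp.single 1 l : Fin 2 →₀ ℕ)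
    = Finsupp.single 0 k' + Finsupp.single 1 l') : k = k' ∧ l = l' := by
  constructor
  · have := congrArg (fun f : Fin 2 →₀ ℕ => f 0) h
    simpa [mu_apply0] using this
  · have := congrArg (fun f : Fin 2 →₀ ℕ => f 1) h
    simpa [mu_apply1] using this

lemma coeff_myQ (d : ℕ) (c : ℕ → ℝ) (p q : ℕ) (hpq : p + q = d) :
    coeff (Finsupp.single 0 p + Finsupp.single 1 q) (myQ d c) =
      c p / ((p.factorial : ℝ) * (q.factorial : ℝ)) := by
  rw [myQ, coeff_sum]
  rw [Finset.sum_eq_single p]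
  · rw [coeff_monomial, if_pos]
    · rw [show d - p = q by omega]
    · rw [show d - p = q by omega]
  · intro k hk hkp
    rw [coeff_monomial, if_neg]
    intro h
    exact hkp (mu_inj h).1
  · intro hp
    exact absurd (Finset.mem_range.2 (by omega)) hp

lemma coeff_myQ_ne_zero {d : ℕ} {c : ℕ → ℝ} {β : Fin 2 →₀ ℕ} (h : coeff β (myQ d c) ≠ 0) :
    ∃ k, k ≤ d ∧ c k ≠ 0 ∧ β = Finsupp.single 0 k + Finsupp.single 1 (d - k) := by
  rw [myQ, coeff_sum] at h
  obtain ⟨k, hk, hne⟩ := Finset.exists_ne_zero_of_sum_ne_zero h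
  rw [coeff_monomial] at hne
  by_cases hb : (Finsupp.single (0:Fin 2) k + Finsupp.single 1 (d-k) : Fin 2 →₀ ℕ) = β
  · have hkd : k ≤ d := by have := Finset.mem_range.1 hk; omega
    refine ⟨k, hkd, ?_, hb.symm⟩
    rw [if_pos hb] at hne
    intro h0
    apply hne
    rw [h0, zero_div]
  · rw [if_neg hb] at hne; exact absurd rfl hne

lemma fin2_degree (f : Fin 2 →₀ ℕ) : f.degree = f 0 + f 1 := by
  rw [Finsupp.degree_apply, Finset.sum_subset (Finset.subset_univ f.support)]
  · simp [Fin.sum_univ_two]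
  · intro x _ hx
    exact Finsupp.notMem_support_iff.1 hx

lemma myQ_homog (d : ℕ) (c : ℕ → ℝ) : (myQ d c).IsHomogeneous d := by
  apply MvPolynomial.IsHomogeneous.sum
  intro k hk
  apply isHomogeneous_monomial
  rw [fin2_degree]
  have : k ≤ d := by have := Finset.mem_range.1 hk; omega
  simp [Finsupp.single_apply]
  omega

lemma myQ_nonneg (d : ℕ) (c : ℕ → ℝ) (h : ∀ k, 0 ≤ c k) (β : Fin 2 →₀ ℕ) :
    0 ≤ coeff β (myQ d c) := by
  rw [myQ, coeff_sum]
  apply Finset.sum_nonneg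
  intro k _
  rw [coeff_monomial]
  split_ifs
  · exact div_nonneg (h k) (by positivity)
  · exact le_refl 0

lemma pderivMulti_two (γ : Fin 2 → ℕ) (P : MvPolynomial (Fin 2) ℝ) :
    pderivMulti γ P = (fun R => pderiv 0 R)^[γ 0] ((fun R => pderiv 1 R)^[γ 1] P) := rfl

lemma hess_myQ (d : ℕ) (c : ℕ → ℝ) (γ : Fin 2 → ℕ) (hγ : γ 0 + γ 1 = d - 2) (hd2 : 2 ≤ d) :
    hess (pderivMulti γ (myQ d c)) =
      !![c (γ 0 + 2), c (γ 0 + 1); c (γ 0 + 1), c (γ 0)] := by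
  set a := γ 0
  set b := γ 1
  have hab : a + b = d - 2 := hγ
  ext i j
  rw [pderivMulti_two]
  show coeff 0 (pderiv i (pderiv j ((fun R => pderiv 0 R)^[a] ((fun R => pderiv 1 R)^[b] (myQ d c))))) = _
  rw [my_coeff_pderiv, my_coeff_pderiv, my_coeff_pderiv_iterate, my_coeff_pderiv_iterate]
  have hfac2 : ∀ x : ℕ, 2 * (2 + x).descFactorial x = (x + 2).factorial := by
    intro x
    have h := Nat.factorial_mul_descFactorial (n := x + 2) (k := x) (Nat.le_add_right x 2)
    rw [show x + 2 - x = 2 by omega] at h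
    rw [show 2 + x = x + 2 by omega]
    simpa [Nat.factorial] using h
  have hfac1 : ∀ x : ℕ, (1 + x).descFactorial x = (x + 1).factorial := by
    intro x
    have h := Nat.factorial_mul_descFactorial (n := x + 1) (k := x) (Nat.le_add_right x 1)
    rw [show x + 1 - x = 1 by omega] at h
    rw [show 1 + x = x + 1 by omega]
    simpa [Nat.factorial] using h
  have hfs : ∀ x : ℕ, x.descFactorial x = x.factorial := fun x => Nat.descFactorial_self x
  have hne : ∀ x : ℕ, ((x.factorial : ℝ)) ≠ 0 := fun x => by
    exact_mod_cast (Nat.factorial_ne_zero x)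
  fin_cases i <;> fin_cases j <;> simp [Finsupp.single_apply]
  · have hexp : ((((Finsupp.single (0:Fin 2) 1) + Finsupp.single 0 1) + Finsupp.single 0 a)
        + Finsupp.single 1 b : Fin 2 →₀ ℕ) = Finsupp.single 0 (a+2) + Finsupp.single 1 b := by
      ext x; fin_cases x <;> simp [Finsupp.single_apply] <;> omega
    rw [hexp, coeff_myQ d c (a+2) b (by omega)]
    have h1 : (2:ℝ) * ((2+a).descFactorial a : ℝ) = ((a+2).factorial : ℝ) := by
      exact_mod_cast hfac2 a
    have h2 : ((b.descFactorial b : ℕ) : ℝ) = (b.factorial : ℝ) := by exact_mod_cast hfs b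
    rw [h2]
    field_simp
    linear_combination (c (a+2)) * h1
  · have hexp : ((((Finsupp.single (0:Fin 2) 1) + Finsupp.single 1 1) + Finsupp.single 0 a)
        + Finsupp.single 1 b : Fin 2 →₀ ℕ) = Finsupp.single 0 (a+1) + Finsupp.single 1 (b+1) := by
      ext x; fin_cases x <;> simp [Finsupp.single_apply] <;> omega
    rw [hexp, coeff_myQ d c (a+1) (b+1) (by omega)]
    have h1 : (((1+a).descFactorial a : ℕ) : ℝ) = ((a+1).factorial : ℝ) := by exact_mod_cast hfac1 a
    have h2 : (((1+b).descFactorial b : ℕ) : ℝ) = ((b+1).factorial : ℝ) := by exact_mod_cast hfac1 b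
    rw [h1, h2]
    field_simp
  · have hexp : ((((Finsupp.single (1:Fin 2) 1) + Finsupp.single 0 1) + Finsupp.single 0 a)
        + Finsupp.single 1 b : Fin 2 →₀ ℕ) = Finsupp.single 0 (a+1) + Finsupp.single 1 (b+1) := by
      ext x; fin_cases x <;> simp [Finsupp.single_apply] <;> omega
    rw [hexp, coeff_myQ d c (a+1) (b+1) (by omega)]
    have h1 : (((1+a).descFactorial a : ℕ) : ℝ) = ((a+1).factorial : ℝ) := by exact_mod_cast hfac1 a
    have h2 : (((1+b).descFactorial b : ℕ) : ℝ) = ((b+1).factorial : ℝ) := by exact_mod_cast hfac1 b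
    rw [h1, h2]
    field_simp
  · have hexp : ((((Finsupp.single (1:Fin 2) 1) + Finsupp.single 1 1) + Finsupp.single 0 a)
        + Finsupp.single 1 b : Fin 2 →₀ ℕ) = Finsupp.single 0 a + Finsupp.single 1 (b+2) := by
      ext x; fin_cases x <;> simp [Finsupp.single_apply] <;> omega
    rw [hexp, coeff_myQ d c a (b+2) (by omega)]
    have h1 : (2:ℝ) * ((2+b).descFactorial b : ℝ) = ((b+2).factorial : ℝ) := by
      exact_mod_cast hfac2 b
    have h2 : ((a.descFactorial a : ℕ) : ℝ) = (a.factorial : ℝ) := by exact_mod_cast hfs a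
    rw [h2]
    field_simp
    linear_combination (c a) * h1

lemma herm2 (A B C : ℝ) : (!![A, B; B, C]).IsHermitian := by
  unfold Matrix.IsHermitian
  ext i j
  fin_cases i <;> fin_cases j <;> simp [Matrix.conjTranspose_apply]

lemma atMostOne_of_det_nonpos {A B C : ℝ} (h : A * C ≤ B ^ 2) :
    AtMostOnePosEigenvalue !![A, B; B, C] := by
  intro hM
  by_contra hcard
  push_neg at hcard
  have hall : ∀ i, 0 < hM.eigenvalues i := by
    intro i
    by_contra hi
    have hsub : (Finset.univ.filter fun i => 0 < hM.eigenvalues i) ⊆ Finset.univ.erase i := by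
      intro x hx
      rw [Finset.mem_erase]
      refine ⟨?_, Finset.mem_univ x⟩
      rintro rfl
      exact hi (Finset.mem_filter.1 hx).2
    have := Finset.card_le_card hsub
    rw [Finset.card_erase_of_mem (Finset.mem_univ i)] at this
    simp at this
    omega
  have hdet : (!![A, B; B, C]).det = ∏ i, hM.eigenvalues i := by
    simpa using hM.det_eq_prod_eigenvalues
  have hdetpos : 0 < (!![A, B; B, C]).det := by
    rw [hdet]
    exact Finset.prod_pos fun i _ => hall i
  rw [Matrix.det_fin_two_of] at hdetpos
  nlinarith
lemma det_nonpos_of_atMostOne {A B C : ℝ} (hA : 0 ≤ A) (hC : 0 ≤ C)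
    (h : AtMostOnePosEigenvalue !![A, B; B, C]) : A * C ≤ B ^ 2 := by
  by_contra hlt
  push_neg at hlt
  have hApos : 0 < A := by nlinarith
  have hpd : (!![A, B; B, C]).PosDef := by
    refine Matrix.posDef_iff_dotProduct_mulVec.mpr ⟨herm2 A B C, ?_⟩
    intro x hx
    have hx' : x 0 ≠ 0 ∨ x 1 ≠ 0 := by
      by_contra hc
      push_neg at hc
      apply hx
      ext i
      fin_cases i
      · exact hc.1
      · exact hc.2
    have : dotProduct (star x) ((!![A, B; B, C]).mulVec x)
        = A * (x 0 * x 0) + B * (x 0 * x 1) + B * (x 1 * x 0) + C * (x 1 * x 1) := by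
      simp [Matrix.mulVec, dotProduct, Fin.sum_univ_two]
      ring
    rw [this]
    rcases eq_or_ne (x 1) 0 with h1 | h1
    · have h0 : x 0 ≠ 0 := by
        rcases hx' with h0 | h1'
        · exact h0
        · exact absurd h1 h1'
      rw [h1]
      have := mul_self_pos.2 h0
      nlinarith
    · nlinarith [sq_nonneg (A * x 0 + B * x 1), mul_self_pos.2 h1]
  have h2 : ∀ i, 0 < (herm2 A B C).eigenvalues i := by
    intro i
    have := hpd.eigenvalues_pos i
    convert this using 2
  have := h (herm2 A B C)
  have heq : (Finset.univ.filter fun i => 0 < (herm2 A B C).eigenvalues i) = Finset.univ := by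
    apply Finset.filter_true_of_mem
    intro i _
    exact h2 i
  rw [heq] at this
  simp at this

lemma mem_S_iff (d : ℕ) (c : ℕ → ℝ) (k : ℕ) (hk : k ≤ d) :
    coeff (Finsupp.single 0 k + Finsupp.single 1 (d - k)) (myQ d c) ≠ 0 ↔ c k ≠ 0 := by
  rw [coeff_myQ d c k (d - k) (by omega)]
  rw [div_ne_zero_iff]
  constructor
  · exact fun h => h.1
  · intro h
    refine ⟨h, ?_⟩
    have h1 := Nat.factorial_ne_zero k
    have h2 := Nat.factorial_ne_zero (d - k)
    positivity

lemma ex_down (d k : ℕ) (hk1 : 1 ≤ k) (hkd : k ≤ d) :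
    (Finsupp.single (0:Fin 2) k + Finsupp.single 1 (d - k) : Fin 2 →₀ ℕ)
        - Finsupp.single 0 1 + Finsupp.single 1 1
      = Finsupp.single 0 (k - 1) + Finsupp.single 1 (d - (k - 1)) := by
  ext x
  fin_cases x <;> simp [Finsupp.single_apply, Finsupp.tsub_apply] <;> omega

lemma ex_up (d k : ℕ) (hkd : k < d) :
    (Finsupp.single (0:Fin 2) k + Finsupp.single 1 (d - k) : Fin 2 →₀ ℕ)
        - Finsupp.single 1 1 + Finsupp.single 0 1
      = Finsupp.single 0 (k + 1) + Finsupp.single 1 (d - (k + 1)) := by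
  ext x
  fin_cases x <;> simp [Finsupp.single_apply, Finsupp.tsub_apply] <;> omega

lemma mconvex_forward (d : ℕ) (c : ℕ → ℝ)
    (hniz : ∀ i j k : ℕ, i ≤ j → j ≤ k → k ≤ d → c i ≠ 0 → c k ≠ 0 → c j ≠ 0) :
    MConvexSupport {α | coeff α (myQ d c) ≠ 0} := by
  intro α hα β hβ i hi
  obtain ⟨k1, hk1d, hc1, rfl⟩ := coeff_myQ_ne_zero hα
  obtain ⟨k2, hk2d, hc2, rfl⟩ := coeff_myQ_ne_zero hβ
  have hi2 : i = 0 ∨ i = 1 := by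
    fin_cases i
    · exact Or.inl rfl
    · exact Or.inr rfl
  rcases hi2 with rfl | rfl
  · -- k2 < k1
    have hlt : k2 < k1 := by
      have h1 := hi
      simpa [Finsupp.single_apply] using h1
    refine ⟨1, ?_, ?_, ?_⟩
    · simp [Finsupp.single_apply]; omega
    · rw [ex_down d k1 (by omega) hk1d]
      exact (mem_S_iff d c (k1 - 1) (by omega)).2 (hniz k2 (k1 - 1) k1 (by omega) (by omega) hk1d hc2 hc1)
    · rw [ex_up d k2 (by omega)]
      exact (mem_S_iff d c (k2 + 1) (by omega)).2 (hniz k2 (k2 + 1) k1 (by omega) (by omega) hk1d hc2 hc1)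
  · -- d - k2 < d - k1, so k1 < k2
    have hlt : k1 < k2 := by
      have h1 := hi
      simp [Finsupp.single_apply] at h1
      omega
    refine ⟨0, ?_, ?_, ?_⟩
    · simp [Finsupp.single_apply]; omega
    · rw [ex_up d k1 (by omega)]
      exact (mem_S_iff d c (k1 + 1) (by omega)).2 (hniz k1 (k1 + 1) k2 (by omega) (by omega) hk2d hc1 hc2)
    · rw [ex_down d k2 (by omega) hk2d]
      exact (mem_S_iff d c (k2 - 1) (by omega)).2 (hniz k1 (k2 - 1) k2 (by omega) (by omega) hk2d hc1 hc2)

lemma mconvex_backward (d : ℕ) (c : ℕ → ℝ)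
    (hmc : MConvexSupport {α | coeff α (myQ d c) ≠ 0}) :
    ∀ i j k : ℕ, i ≤ j → j ≤ k → k ≤ d → c i ≠ 0 → c k ≠ 0 → c j ≠ 0 := by
  suffices H : ∀ n i j k : ℕ, k - i ≤ n → i ≤ j → j ≤ k → k ≤ d → c i ≠ 0 → c k ≠ 0 → c j ≠ 0 by
    intro i j k h1 h2 h3 h4 h5
    exact H (k - i) i j k le_rfl h1 h2 h3 h4 h5
  intro n
  induction n with
  | zero =>
    intro i j k hn h1 h2 h3 h4 h5
    have : j = i := by omega
    rw [this]; exact h4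
  | succ n ih =>
    intro i j k hn h1 h2 h3 hci hck
    rcases eq_or_lt_of_le h1 with rfl | hij
    · exact hci
    rcases eq_or_lt_of_le h2 with rfl | hjk
    · exact hck
    -- i < j < k
    have hαmem : (Finsupp.single (0:Fin 2) k + Finsupp.single 1 (d - k)) ∈
        {α | coeff α (myQ d c) ≠ 0} := (mem_S_iff d c k h3).2 hck
    have hβmem : (Finsupp.single (0:Fin 2) i + Finsupp.single 1 (d - i)) ∈
        {α | coeff α (myQ d c) ≠ 0} := (mem_S_iff d c i (by omega)).2 hci
    obtain ⟨jdx, hjdx, hm1, hm2⟩ := hmc _ hαmem _ hβmem 0 (by simp [Finsupp.single_apply]; omega)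
    have hj2 : jdx = 0 ∨ jdx = 1 := by
      fin_cases jdx
      · exact Or.inl rfl
      · exact Or.inr rfl
    rcases hj2 with rfl | rfl
    · exfalso
      simp [Finsupp.single_apply] at hjdx
      omega
    · rw [ex_down d k (by omega) h3] at hm1
      rw [ex_up d i (by omega)] at hm2
      have hck1 : c (k - 1) ≠ 0 := (mem_S_iff d c (k - 1) (by omega)).1 hm1
      have hci1 : c (i + 1) ≠ 0 := (mem_S_iff d c (i + 1) (by omega)).1 hm2
      exact ih (i + 1) j (k - 1) (by omega) (by omega) (by omega) (by omega) hci1 hck1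

/-- For a one-variable polynomial `P(t) = Σ_{k=0}^d c_k t^k` with nonnegative
coefficients and `c d ≠ 0`, the coefficient sequence is log-concave with no
internal zeros iff the normalized homogenization `N(Homog(P))` is Lorentzian. -/
theorem logConcave_iff_lorentzian (d : ℕ) (hd2 : 2 ≤ d) (c : ℕ → ℝ)
    (hnonneg : ∀ k, 0 ≤ c k) (hd : c d ≠ 0)
    (Q : MvPolynomial (Fin 2) ℝ)
    (hQ : Q = ∑ k ∈ Finset.range (d + 1),
      monomial (Finsupp.single 0 k + Finsupp.single 1 (d - k))
        (c k / ((k.factorial : ℝ) * ((d - k).factorial : ℝ)))) :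
    ((∀ a : ℕ, a + 2 ≤ d → c a * c (a + 2) ≤ (c (a + 1)) ^ 2) ∧
      (∀ i j k : ℕ, i ≤ j → j ≤ k → k ≤ d → c i ≠ 0 → c k ≠ 0 → c j ≠ 0)) ↔
    Lorentzian d Q := by
  subst hQ
  have hQ' : (∑ k ∈ Finset.range (d + 1),
      monomial (Finsupp.single 0 k + Finsupp.single 1 (d - k))
        (c k / ((k.factorial : ℝ) * ((d - k).factorial : ℝ)))) = myQ d c := rfl
  rw [hQ']
  constructor
  · rintro ⟨hlc, hniz⟩
    refine ⟨myQ_homog d c, myQ_nonneg d c hnonneg, mconvex_forward d c hniz, ?_⟩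
    intro γ hγ
    rw [Fin.sum_univ_two] at hγ
    rw [hess_myQ d c γ hγ hd2]
    apply atMostOne_of_det_nonpos
    have h := hlc (γ 0) (by omega)
    nlinarith [h]
  · rintro ⟨hhom, hnn, hmc, hhess⟩
    refine ⟨?_, mconvex_backward d c hmc⟩
    intro a ha
    have hγ : (![a, d - 2 - a] : Fin 2 → ℕ) 0 + (![a, d - 2 - a] : Fin 2 → ℕ) 1 = d - 2 := by
      simp
      omega
    have h := hhess ![a, d - 2 - a] (by rw [Fin.sum_univ_two]; exact hγ)
    rw [hess_myQ d c ![a, d - 2 - a] hγ hd2] at h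
    have h2 := det_nonpos_of_atMostOne (hnonneg _) (hnonneg _) h
    simp only [Matrix.cons_val_zero] at h2
    nlinarith [h2]
end
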